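/- Let f_0 = x, f_1, ..., f_n ∈ ℤ[x] be irreducible monic non-constant polynomials that are pairwise coprime in ℤ[x, 1/k] for a positive integer k, set F = f_0 f_1 ⋯ f_n, and let A = ℤ[x, x^{-1}, f_1^{-1}, ..., f_n^{-1}, 1/k] ⊆ ℚ(x). Given a_0, a_1, ..., a_n ∈ A, there exist t ≥ 0 and a ∈ A such that v_i(a - a_i) ≥ 0 for all 0 ≤ i ≤ n and w(a) > 0, where v_i is the f_i-adic valuation on ℚ(x) and w(g/h) = deg h - deg g. -/

import Mathlib

open scoped Classical

/-- The image of an integer polynomial in the field of rational functions `ℚ(x)`. -/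
noncomputable def toRF (g : Polynomial ℤ) : RatFunc ℚ :=
  algebraMap (Polynomial ℚ) (RatFunc ℚ) (g.map (Int.castRingHom ℚ))

open Polynomial
/-- The degree valuation `w(g/h) = deg h - deg g`, with `w 0 = ∞`. -/
noncomputable def wdeg (r : RatFunc ℚ) : WithTop ℤ :=
  if r = 0 then ⊤ else (((r.denom.natDegree : ℤ) - (r.num.natDegree : ℤ) : ℤ) : WithTop ℤ)

lemma wdeg_div (p q : Polynomial ℚ) (hp : p ≠ 0) (hq : q ≠ 0) :
    wdeg (algebraMap (Polynomial ℚ) (RatFunc ℚ) p / algebraMap (Polynomial ℚ) (RatFunc ℚ) q)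
      = (((q.natDegree : ℤ) - (p.natDegree : ℤ) : ℤ) : WithTop ℤ) := by
  have hinj := RatFunc.algebraMap_injective ℚ
  have hpne : algebraMap (Polynomial ℚ) (RatFunc ℚ) p ≠ 0 := by
    rw [Ne, map_eq_zero_iff _ hinj]; exact hp
  have hqne : algebraMap (Polynomial ℚ) (RatFunc ℚ) q ≠ 0 := by
    rw [Ne, map_eq_zero_iff _ hinj]; exact hq
  set r := algebraMap (Polynomial ℚ) (RatFunc ℚ) p / algebraMap (Polynomial ℚ) (RatFunc ℚ) q
    with hr
  have hrne : r ≠ 0 := div_ne_zero hpne hqne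
  have hnum : r.num ≠ 0 := RatFunc.num_ne_zero hrne
  have hden : r.denom ≠ 0 := r.denom_ne_zero
  have hdne : algebraMap (Polynomial ℚ) (RatFunc ℚ) r.denom ≠ 0 := by
    rw [Ne, map_eq_zero_iff _ hinj]; exact hden
  have h2 : algebraMap (Polynomial ℚ) (RatFunc ℚ) r.num
      / algebraMap (Polynomial ℚ) (RatFunc ℚ) r.denom
      = algebraMap (Polynomial ℚ) (RatFunc ℚ) p / algebraMap (Polynomial ℚ) (RatFunc ℚ) q :=
    (RatFunc.num_div_denom r).trans hr
  have h3 : r.num * q = p * r.denom := by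
    apply hinj
    rw [map_mul, map_mul]
    exact (div_eq_div_iff hdne hqne).mp h2
  have h4 : r.num.natDegree + q.natDegree = p.natDegree + r.denom.natDegree := by
    rw [← Polynomial.natDegree_mul hnum hq, ← Polynomial.natDegree_mul hp hden, h3]
  rw [wdeg, if_neg hrne]
  congr 1
  omega

noncomputable def TO : Polynomial ℤ →+* RatFunc ℚ :=
  (algebraMap (Polynomial ℚ) (RatFunc ℚ)).comp (mapRingHom (Int.castRingHom ℚ))

lemma toRF_eq : toRF = ⇑TO := rfl

lemma toRF_inj : Function.Injective toRF := by
  rw [toRF_eq]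
  exact (RatFunc.algebraMap_injective ℚ).comp
    (Polynomial.map_injective _ Int.cast_injective)

lemma toRF_ne_zero {p : Polynomial ℤ} (hp : p ≠ 0) : toRF p ≠ 0 := by
  intro h
  exact hp (toRF_inj (by simpa [toRF_eq, map_zero] using h))

lemma toRF_C (c : ℤ) : toRF (C c) = algebraMap ℚ (RatFunc ℚ) (c : ℚ) := by
  rw [toRF]
  rw [Polynomial.map_C]
  rw [RatFunc.algebraMap_C]
  rw [eq_intCast]
  rw [map_intCast, map_intCast]

lemma intCast_toRF (c : ℤ) : (c : RatFunc ℚ) = toRF (C c) := by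
  rw [toRF_C]
  rw [show ((c:ℚ)) = ((c:ℤ):ℚ) from rfl, map_intCast]

lemma toRF_zero : toRF 0 = 0 := map_zero TO
lemma toRF_one : toRF 1 = 1 := map_one TO
lemma toRF_mul (p q : Polynomial ℤ) : toRF (p * q) = toRF p * toRF q := map_mul TO p q
lemma toRF_add (p q : Polynomial ℤ) : toRF (p + q) = toRF p + toRF q := map_add TO p q
lemma toRF_sub (p q : Polynomial ℤ) : toRF (p - q) = toRF p - toRF q := map_sub TO p q
lemma toRF_neg (p : Polynomial ℤ) : toRF (-p) = -toRF p := map_neg TO p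
lemma toRF_pow (p : Polynomial ℤ) (m : ℕ) : toRF (p ^ m) = toRF p ^ m := map_pow TO p m
lemma toRF_prod {ι : Type*} (s : Finset ι) (g : ι → Polynomial ℤ) :
    toRF (∏ j ∈ s, g j) = ∏ j ∈ s, toRF (g j) := map_prod TO g s

section V

variable (V : RatFunc ℚ → WithTop ℤ)
variable (hv0 : V 0 = ⊤)
variable (hvQ : ∀ c : ℚ, c ≠ 0 → V (algebraMap ℚ (RatFunc ℚ) c) = 0)
variable (hvmul : ∀ a b, V (a * b) = V a + V b)
variable (hvadd : ∀ a b, min (V a) (V b) ≤ V (a + b))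

include hvQ in
lemma V_one : V 1 = 0 := by simpa using hvQ 1 one_ne_zero

include hvQ hvmul in
lemma V_neg (a : RatFunc ℚ) : V (-a) = V a := by
  have h1 : V (-1 : RatFunc ℚ) = 0 := by
    have := hvQ (-1) (by norm_num)
    simpa using this
  have := hvmul (-1) a
  simpa [h1] using this

include hvQ hvmul hvadd in
lemma V_sub (a b : RatFunc ℚ) : min (V a) (V b) ≤ V (a - b) := by
  have := hvadd a (-b)
  rw [V_neg V hvQ hvmul] at this
  simpa [sub_eq_add_neg] using this

include hvQ hvmul hvadd in
lemma V_add_eq_left {a b : RatFunc ℚ} (h : V a < V b) : V (a + b) = V a := by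
  refine le_antisymm ?_ (le_trans (by simp [le_of_lt h]) (hvadd a b))
  by_contra hc
  push_neg at hc
  have h2 : min (V (a + b)) (V b) ≤ V a := by
    have := V_sub V hvQ hvmul hvadd (a + b) b
    simpa using this
  have : V a < min (V (a + b)) (V b) := lt_min hc h
  exact absurd h2 (not_le.mpr this)

include hvQ hvmul in
lemma V_fin {a : RatFunc ℚ} (ha : a ≠ 0) : ∃ c : ℤ, V a = (c : WithTop ℤ) := by
  have h := hvmul a a⁻¹
  rw [mul_inv_cancel₀ ha, V_one V hvQ] at h
  cases hva : V a with
  | top => rw [hva, top_add] at h; exact absurd h.symm (by simp)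
  | coe c => exact ⟨c, rfl⟩

include hvQ hvmul in
lemma V_inv {a : RatFunc ℚ} {c : ℤ} (ha : a ≠ 0) (hc : V a = (c : WithTop ℤ)) :
    V a⁻¹ = ((-c : ℤ) : WithTop ℤ) := by
  have h := hvmul a a⁻¹
  rw [mul_inv_cancel₀ ha, V_one V hvQ, hc] at h
  cases hvi : V a⁻¹ with
  | top => rw [hvi, add_top] at h; exact absurd h.symm (by simp)
  | coe d =>
    rw [hvi, ← WithTop.coe_add] at h
    have : (0 : ℤ) = c + d := by exact_mod_cast h
    have : d = -c := by omega
    exact_mod_cast congrArg (fun z : ℤ => (z : WithTop ℤ)) this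

include hvQ hvmul in
lemma V_pow {a : RatFunc ℚ} {c : ℤ} (hc : V a = (c : WithTop ℤ)) (m : ℕ) :
    V (a ^ m) = ((m * c : ℤ) : WithTop ℤ) := by
  induction m with
  | zero => simpa using V_one V hvQ
  | succ s ih =>
    rw [pow_succ, hvmul, ih, hc, ← WithTop.coe_add]
    congr 1
    push_cast
    ring

include hvQ hvmul in
lemma V_pow_ge {a : RatFunc ℚ} {c : ℤ} (hc : (c : WithTop ℤ) ≤ V a) (m : ℕ) :
    ((m * c : ℤ) : WithTop ℤ) ≤ V (a ^ m) := by
  induction m with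
  | zero => simp [pow_zero, V_one V hvQ]
  | succ s ih =>
    rw [pow_succ, hvmul]
    calc (((s+1 : ℕ) * c : ℤ) : WithTop ℤ) = ((s * c : ℤ) : WithTop ℤ) + (c : WithTop ℤ) := by
          rw [← WithTop.coe_add]; congr 1; push_cast; ring
    _ ≤ V (a ^ s) + V a := add_le_add ih hc

include hvQ hvmul in
lemma V_prod {ι : Type*} (s : Finset ι) (g : ι → RatFunc ℚ) :
    V (∏ j ∈ s, g j) = ∑ j ∈ s, V (g j) := by
  induction s using Finset.induction_on with
  | empty => simpa using V_one V hvQ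
  | insert _ _ hx ih =>
    rw [Finset.prod_insert hx, Finset.sum_insert hx, hvmul, ih]

end V
section V2

variable (V : RatFunc ℚ → WithTop ℤ)
variable (hv0 : V 0 = ⊤)
variable (hvQ : ∀ c : ℚ, c ≠ 0 → V (algebraMap ℚ (RatFunc ℚ) c) = 0)
variable (hvmul : ∀ a b, V (a * b) = V a + V b)
variable (hvadd : ∀ a b, min (V a) (V b) ≤ V (a + b))

include hv0 hvadd in
lemma V_sum_ge {ι : Type*} (s : Finset ι) (g : ι → RatFunc ℚ) {c : WithTop ℤ}
    (h : ∀ j ∈ s, c ≤ V (g j)) : c ≤ V (∑ j ∈ s, g j) := by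
  induction s using Finset.induction_on with
  | empty => rw [Finset.sum_empty, hv0]; exact le_top
  | @insert x s hx ih =>
    rw [Finset.sum_insert hx]
    refine le_trans (le_min (h _ (Finset.mem_insert_self _ _))
      (ih fun j hj => h _ (Finset.mem_insert_of_mem hj))) (hvadd _ _)

include hv0 hvQ hvmul hvadd in
lemma V_poly_ge (e : ℤ) (he : e ≤ 0) (hxe : (e : WithTop ℤ) ≤ V (toRF X)) (p : Polynomial ℤ) :
    (((p.natDegree : ℤ) * e : ℤ) : WithTop ℤ) ≤ V (toRF p) := by
  conv_rhs => rw [p.as_sum_range' (p.natDegree + 1) (Nat.lt_succ_self _)]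
  rw [toRF_eq, map_sum]
  apply V_sum_ge V hv0 hvadd
  intro j hj
  have hjle : j ≤ p.natDegree := Nat.lt_succ_iff.mp (Finset.mem_range.mp hj)
  by_cases hc : p.coeff j = 0
  · rw [hc, monomial_zero_right, map_zero, hv0]; exact le_top
  · rw [← C_mul_X_pow_eq_monomial, show TO (C (p.coeff j) * X ^ j)
      = toRF (C (p.coeff j)) * (toRF X) ^ j by rw [toRF_eq]; simp [map_mul, map_pow]]
    rw [hvmul, toRF_C, hvQ _ (by exact_mod_cast hc), zero_add]
    refine le_trans ?_ (V_pow_ge V hvQ hvmul hxe j)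
    rw [WithTop.coe_le_coe]
    exact mul_le_mul_of_nonpos_right (by exact_mod_cast hjle) he

include hv0 hvQ hvmul hvadd in
lemma V_X_nonneg {F : Polynomial ℤ} (hF : F.Monic) (hd : 0 < F.natDegree)
    (hVF : V (toRF F) = 1) : 0 ≤ V (toRF X) := by
  by_contra h
  push_neg at h
  cases vx : V (toRF X) with
  | top => rw [vx] at h; exact absurd le_top (not_le.mpr h)
  | coe e =>
    rw [vx] at h
    have he : e < 0 := by exact_mod_cast h
    set d := F.natDegree with hdd
    have hXd : V (toRF (X ^ d)) = (((d : ℤ) * e : ℤ) : WithTop ℤ) := by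
      rw [show toRF (X ^ d) = (toRF X) ^ d by rw [toRF_eq, map_pow]]
      exact V_pow V hvQ hvmul vx d
    have key : V (toRF F) = (((d : ℤ) * e : ℤ) : WithTop ℤ) := by
      by_cases hr : F - X ^ d = 0
      · have hF' : F = X ^ d := by rwa [sub_eq_zero] at hr
        rw [hF', hXd]
      · have hdegF : F.degree = (d : WithBot ℕ) := Polynomial.degree_eq_natDegree hF.ne_zero
        have hlt : (F - X ^ d).degree < F.degree := by
          apply degree_sub_lt _ hF.ne_zero _
          · rw [hdegF, degree_X_pow]
          · rw [hF.leadingCoeff, leadingCoeff_X_pow]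
        have hnr : (F - X ^ d).natDegree < d := by
          rw [hdegF] at hlt
          exact (natDegree_lt_iff_degree_lt hr).mpr hlt
        have hVr : ((((F - X ^ d).natDegree : ℤ) * e : ℤ) : WithTop ℤ) ≤ V (toRF (F - X ^ d)) :=
          V_poly_ge V hv0 hvQ hvmul hvadd e (le_of_lt he) (le_of_eq vx.symm) _
        have hstrict : V (toRF (X ^ d)) < V (toRF (F - X ^ d)) := by
          refine lt_of_lt_of_le ?_ hVr
          rw [hXd, WithTop.coe_lt_coe]
          exact mul_lt_mul_of_neg_right (by exact_mod_cast hnr) he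
        rw [show toRF F = toRF (X ^ d) + toRF (F - X ^ d) by
          rw [toRF_eq, ← map_add]; congr 1; ring]
        rw [V_add_eq_left V hvQ hvmul hvadd hstrict, hXd]
    rw [hVF] at key
    have h1 : (1 : ℤ) = (d : ℤ) * e := by exact_mod_cast key
    have hd1 : (1 : ℤ) ≤ (d : ℤ) := by exact_mod_cast hd
    nlinarith

include hv0 hvQ hvmul hvadd in
lemma V_poly_nonneg (hx : 0 ≤ V (toRF X)) (p : Polynomial ℤ) : 0 ≤ V (toRF p) := by
  have := V_poly_ge V hv0 hvQ hvmul hvadd 0 le_rfl (by simpa using hx) p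
  simpa using this

end V2
theorem stmt7 (n : ℕ) (k : ℤ) (hk : 0 < k)
    (f : Fin (n + 1) → Polynomial ℤ)
    (hf0 : f 0 = Polynomial.X)
    (hirr : ∀ i, Irreducible (f i))
    (hmonic : ∀ i, (f i).Monic)
    (hdeg : ∀ i, 0 < (f i).natDegree)
    (hcop : ∀ i j, i ≠ j →
      IsCoprime
        (algebraMap (Polynomial ℤ) (Localization.Away (Polynomial.C k)) (f i))
        (algebraMap (Polynomial ℤ) (Localization.Away (Polynomial.C k)) (f j)))
    (A : Subring (RatFunc ℚ))
    (hA : A = Subring.closure (Set.range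
      fun p : (Fin (n + 1) → ℤ) × ℤ => (k : RatFunc ℚ) ^ p.2 * ∏ j, toRF (f j) ^ p.1 j))
    (v : Fin (n + 1) → RatFunc ℚ → WithTop ℤ)
    (hv0 : ∀ i, v i 0 = ⊤)
    (hvQ : ∀ i, ∀ c : ℚ, c ≠ 0 → v i (algebraMap ℚ (RatFunc ℚ) c) = 0)
    (hvmul : ∀ i a b, v i (a * b) = v i a + v i b)
    (hvadd : ∀ i a b, min (v i a) (v i b) ≤ v i (a + b))
    (hvf : ∀ i, v i (toRF (f i)) = 1)
    (aa : Fin (n + 1) → RatFunc ℚ) (haa : ∀ i, aa i ∈ A) :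
    ∃ a ∈ A, (∀ i, 0 ≤ v i (a - aa i)) ∧ 0 < wdeg a := by
  set S : Set (RatFunc ℚ) := Set.range
      (fun p : (Fin (n + 1) → ℤ) × ℤ => (k : RatFunc ℚ) ^ p.2 * ∏ j, toRF (f j) ^ p.1 j)
    with hS
  subst hA
  set F : Polynomial ℤ := ∏ j, f j with hF
  have hkz : k ≠ 0 := hk.ne'
  have hCk : (Polynomial.C k : Polynomial ℤ) ≠ 0 := by
    simpa [Polynomial.C_eq_zero] using hkz
  have hkRF : (k : RatFunc ℚ) ≠ 0 := by
    rw [intCast_toRF]; exact toRF_ne_zero hCk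
  have hfne : ∀ j, f j ≠ 0 := fun j => (hmonic j).ne_zero
  have hfRF : ∀ j, toRF (f j) ≠ 0 := fun j => toRF_ne_zero (hfne j)
  have hFmonic : F.Monic := monic_prod_of_monic _ _ fun i _ => hmonic i
  have hkQ : (k : ℚ) ≠ 0 := by exact_mod_cast hkz
  have hkpow : ∀ m : ℕ, (k : RatFunc ℚ) ^ m = toRF (Polynomial.C k ^ m) := by
    intro m; rw [intCast_toRF, toRF_pow]
  have hvk : ∀ i, v i ((k : RatFunc ℚ)) = ((0 : ℤ) : WithTop ℤ) := by
    intro i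
    rw [show (k : RatFunc ℚ) = algebraMap ℚ (RatFunc ℚ) (k : ℚ) from (map_intCast _ k).symm]
    exact hvQ i _ hkQ
  have hvkpow : ∀ i (m : ℕ), v i ((k : RatFunc ℚ) ^ m) = 0 := by
    intro i m
    have := V_pow (v i) (hvQ i) (hvmul i) (hvk i) m
    simpa using this
  have hx : ∀ i, 0 ≤ v i (toRF Polynomial.X) :=
    fun i => V_X_nonneg (v i) (hv0 i) (hvQ i) (hvmul i) (hvadd i) (hmonic i) (hdeg i) (hvf i)
  have hpoly : ∀ i p, 0 ≤ v i (toRF p) :=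
    fun i => V_poly_nonneg (v i) (hv0 i) (hvQ i) (hvmul i) (hvadd i) (hx i)
  have hinjLoc : Function.Injective
      (algebraMap (Polynomial ℤ) (Localization.Away (Polynomial.C k))) :=
    IsLocalization.injective _ (powers_le_nonZeroDivisors_of_noZeroDivisors hCk)
  set φ := algebraMap (Polynomial ℤ) (Localization.Away (Polynomial.C k)) with hφ
  -- Bézout identities in ℤ[x]
  have bez : ∀ i j, i ≠ j → ∃ (p q : Polynomial ℤ) (s : ℕ),
      p * f i + q * f j = Polynomial.C k ^ s := by
    intro i j hij
    obtain ⟨u, w, huw⟩ := hcop i j hij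
    obtain ⟨⟨p, su⟩, hpu⟩ := IsLocalization.surj (Submonoid.powers (Polynomial.C k)) u
    obtain ⟨⟨q, sw⟩, hqw⟩ := IsLocalization.surj (Submonoid.powers (Polynomial.C k)) w
    obtain ⟨mu, hmu⟩ := su.2
    obtain ⟨mw, hmw⟩ := sw.2
    refine ⟨p * Polynomial.C k ^ mw, q * Polynomial.C k ^ mu, mu + mw, hinjLoc ?_⟩
    simp only at hpu hqw
    rw [← hmu, map_pow] at hpu
    rw [← hmw, map_pow] at hqw
    simp only [map_add, map_mul, map_pow]
    linear_combination (φ (Polynomial.C k)) ^ (mu + mw) * huw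
      - ((φ (Polynomial.C k)) ^ mw * φ (f i)) * hpu
      - ((φ (Polynomial.C k)) ^ mu * φ (f j)) * hqw
  have hvfj_le : ∀ i j, i ≠ j → v i (toRF (f j)) ≤ 0 := by
    intro i j hij
    obtain ⟨p, q, s, hb⟩ := bez i j hij
    have hRF : toRF p * toRF (f i) + toRF q * toRF (f j) = (k : RatFunc ℚ) ^ s := by
      rw [hkpow, ← toRF_mul, ← toRF_mul, ← toRF_add, hb]
    by_contra hgt
    push_neg at hgt
    have h1 : 0 < v i (toRF p * toRF (f i)) := by
      rw [hvmul, hvf]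
      calc (0 : WithTop ℤ) < 1 := by exact_mod_cast (zero_lt_one : (0:ℤ) < 1)
        _ = 0 + 1 := (zero_add 1).symm
        _ ≤ v i (toRF p) + 1 := add_le_add (hpoly i p) le_rfl
    have h2 : 0 < v i (toRF q * toRF (f j)) := by
      rw [hvmul]
      calc (0 : WithTop ℤ) < v i (toRF (f j)) := hgt
        _ = 0 + _ := (zero_add _).symm
        _ ≤ v i (toRF q) + v i (toRF (f j)) := add_le_add (hpoly i q) le_rfl
    have h3 := hvadd i (toRF p * toRF (f i)) (toRF q * toRF (f j))
    rw [hRF, hvkpow] at h3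
    exact absurd h3 (not_le.mpr (lt_min h1 h2))
  -- clearing denominators on elements of A
  have step1 : ∀ r ∈ Subring.closure S, ∃ (t m : ℕ) (g : Polynomial ℤ),
      toRF F ^ t * (k : RatFunc ℚ) ^ m * r = toRF g := by
    intro r hr
    induction hr using Subring.closure_induction with
    | mem x hx =>
      obtain ⟨⟨e, z⟩, rfl⟩ := hx
      set t : ℕ := Finset.univ.sup (fun j => (-(e j)).toNat) with ht
      set m : ℕ := (-z).toNat with hm
      have htj : ∀ j, (0 : ℤ) ≤ (t : ℤ) + e j := by
        intro j
        have h1 : (-(e j)).toNat ≤ t := by rw [ht]; exact Finset.le_sup (f := fun j => (-(e j)).toNat) (Finset.mem_univ j)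
        have h2 := Int.self_le_toNat (-(e j))
        have h3 : ((-(e j)).toNat : ℤ) ≤ (t : ℤ) := by exact_mod_cast h1
        omega
      have hmz : (0 : ℤ) ≤ (m : ℤ) + z := by
        have h2 := Int.self_le_toNat (-z); omega
      refine ⟨t, m, Polynomial.C k ^ ((m : ℤ) + z).toNat * ∏ j, f j ^ ((t : ℤ) + e j).toNat, ?_⟩
      have h1 : ∀ j, toRF (f j) ^ (t : ℤ) * toRF (f j) ^ (e j)
          = toRF (f j ^ ((t : ℤ) + e j).toNat) := by
        intro j
        rw [← zpow_add₀ (hfRF j), toRF_pow,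
          ← zpow_natCast (toRF (f j)) (((t : ℤ) + e j).toNat), Int.toNat_of_nonneg (htj j)]
      have hFt : toRF F ^ t = ∏ j, toRF (f j) ^ (t : ℤ) := by
        rw [hF, toRF_prod, ← Finset.prod_pow]
        exact Finset.prod_congr rfl fun j _ => (zpow_natCast _ t).symm
      have hk2 : (k : RatFunc ℚ) ^ m * (k : RatFunc ℚ) ^ z
          = toRF (Polynomial.C k ^ ((m : ℤ) + z).toNat) := by
        rw [← hkpow, ← zpow_natCast (k : RatFunc ℚ) (((m : ℤ) + z).toNat),
          Int.toNat_of_nonneg hmz, zpow_add₀ hkRF, zpow_natCast]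
      calc toRF F ^ t * (k : RatFunc ℚ) ^ m * ((k : RatFunc ℚ) ^ z * ∏ j, toRF (f j) ^ e j)
          = ((k : RatFunc ℚ) ^ m * (k : RatFunc ℚ) ^ z)
            * ((∏ j, toRF (f j) ^ (t : ℤ)) * ∏ j, toRF (f j) ^ e j) := by rw [hFt]; ring
        _ = toRF (Polynomial.C k ^ ((m : ℤ) + z).toNat)
            * ∏ j, (toRF (f j) ^ (t : ℤ) * toRF (f j) ^ e j) := by
              rw [hk2, Finset.prod_mul_distrib]
        _ = toRF (Polynomial.C k ^ ((m : ℤ) + z).toNat)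
            * ∏ j, toRF (f j ^ ((t : ℤ) + e j).toNat) := by
              rw [Finset.prod_congr rfl fun j _ => h1 j]
        _ = toRF (Polynomial.C k ^ ((m : ℤ) + z).toNat * ∏ j, f j ^ ((t : ℤ) + e j).toNat) := by
              rw [toRF_mul, toRF_prod]
    | zero => exact ⟨0, 0, 0, by simp [toRF_zero]⟩
    | one => exact ⟨0, 0, 1, by simp [toRF_one]⟩
    | add x y hx hy ihx ihy =>
      obtain ⟨t1, m1, g1, e1⟩ := ihx
      obtain ⟨t2, m2, g2, e2⟩ := ihy
      refine ⟨t1 + t2, m1 + m2,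
        g1 * F ^ t2 * Polynomial.C k ^ m2 + g2 * F ^ t1 * Polynomial.C k ^ m1, ?_⟩
      rw [toRF_add, toRF_mul, toRF_mul, toRF_mul, toRF_mul, ← hkpow, ← hkpow,
        toRF_pow, toRF_pow]
      linear_combination (toRF F ^ t2 * (k : RatFunc ℚ) ^ m2) * e1
        + (toRF F ^ t1 * (k : RatFunc ℚ) ^ m1) * e2
    | neg x hx ihx =>
      obtain ⟨t1, m1, g1, e1⟩ := ihx
      exact ⟨t1, m1, -g1, by rw [toRF_neg]; linear_combination -e1⟩
    | mul x y hx hy ihx ihy =>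
      obtain ⟨t1, m1, g1, e1⟩ := ihx
      obtain ⟨t2, m2, g2, e2⟩ := ihy
      refine ⟨t1 + t2, m1 + m2, g1 * g2, ?_⟩
      rw [toRF_mul]
      linear_combination (toRF F ^ t2 * (k : RatFunc ℚ) ^ m2 * y) * e1 + toRF g1 * e2
  -- uniform denominators
  obtain ⟨t, m, g, ht0, hg⟩ : ∃ (t m : ℕ) (g : Fin (n + 1) → Polynomial ℤ), 0 < t ∧
      ∀ i, toRF F ^ t * (k : RatFunc ℚ) ^ m * aa i = toRF (g i) := by
    choose tt mm gg hh using fun i => step1 (aa i) (haa i)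
    have pad : ∀ i, ∃ g' : Polynomial ℤ,
        toRF F ^ (Finset.univ.sup tt + 1) * (k : RatFunc ℚ) ^ (Finset.univ.sup mm) * aa i
          = toRF g' := by
      intro i
      have h1 : tt i ≤ Finset.univ.sup tt := Finset.le_sup (Finset.mem_univ i)
      have h2 : mm i ≤ Finset.univ.sup mm := Finset.le_sup (Finset.mem_univ i)
      obtain ⟨D1, hD1⟩ : ∃ D1, Finset.univ.sup tt + 1 = tt i + D1 :=
        ⟨Finset.univ.sup tt + 1 - tt i, by omega⟩
      obtain ⟨D2, hD2⟩ : ∃ D2, Finset.univ.sup mm = mm i + D2 :=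
        ⟨Finset.univ.sup mm - mm i, by omega⟩
      refine ⟨gg i * F ^ D1 * Polynomial.C k ^ D2, ?_⟩
      rw [hD1, hD2]
      rw [toRF_mul, toRF_mul, toRF_pow, ← hkpow, pow_add, pow_add]
      linear_combination (toRF F ^ D1 * (k : RatFunc ℚ) ^ D2) * hh i
    choose g hg using pad
    exact ⟨Finset.univ.sup tt + 1, Finset.univ.sup mm, g, Nat.succ_pos _, hg⟩
  -- CRT in the localization
  have hcopT : ∀ i : Fin (n + 1),
      IsCoprime (φ (f i) ^ t) (∏ j ∈ Finset.univ.erase i, φ (f j) ^ t) :=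
    fun i => IsCoprime.prod_right fun j hj =>
      (hcop i j (Finset.ne_of_mem_erase hj).symm).pow
  choose uu ww huw2 using fun i => hcopT i
  set c : Localization.Away (Polynomial.C k) :=
    ∑ i, φ (g i) * ww i * ∏ j ∈ Finset.univ.erase i, φ (f j) ^ t with hc
  have hdvd : ∀ i, φ (f i) ^ t ∣ c - φ (g i) := by
    intro i
    have key : c - φ (g i)
        = (∑ j ∈ Finset.univ.erase i, φ (g j) * ww j * ∏ l ∈ Finset.univ.erase j, φ (f l) ^ t)
          - φ (g i) * uu i * φ (f i) ^ t := by
      rw [hc, ← Finset.sum_erase_add Finset.univ _ (Finset.mem_univ i)]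
      linear_combination (φ (g i)) * huw2 i
    rw [key]
    refine dvd_sub (Finset.dvd_sum fun j hj => ?_) (dvd_mul_left _ _)
    exact Dvd.dvd.mul_left (Finset.dvd_prod_of_mem (fun l => φ (f l) ^ t)
      (Finset.mem_erase.mpr ⟨(Finset.ne_of_mem_erase hj).symm, Finset.mem_univ i⟩)) _
  obtain ⟨cp, hc'⟩ := IsLocalization.surj (Submonoid.powers (Polynomial.C k)) c
  obtain ⟨M, hM⟩ := cp.2.2
  rw [← hM, map_pow] at hc'
  set c' : Polynomial ℤ := cp.1 with hc'def
  have hpull : ∀ i : Fin (n + 1), ∃ (N : ℕ) (β : Polynomial ℤ),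
      Polynomial.C k ^ N * (c' - Polynomial.C k ^ M * g i) = f i ^ t * β := by
    intro i
    obtain ⟨b, hb⟩ := hdvd i
    obtain ⟨bp, hb'⟩ := IsLocalization.surj (Submonoid.powers (Polynomial.C k)) b
    obtain ⟨N, hN⟩ := bp.2.2
    rw [← hN, map_pow] at hb'
    refine ⟨N, bp.1 * Polynomial.C k ^ M, hinjLoc ?_⟩
    simp only [map_mul, map_sub, map_pow]
    linear_combination (-((φ (Polynomial.C k)) ^ N)) * hc'
      + ((φ (f i)) ^ t * (φ (Polynomial.C k)) ^ M) * hb'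
      + ((φ (Polynomial.C k)) ^ (N + M)) * hb
  choose NN ββ hNN using hpull
  have hFtMonic : (F ^ t).Monic := hFmonic.pow t
  set rem : Polynomial ℤ := c' %ₘ (F ^ t) with hrem
  have hmodeq : rem + F ^ t * (c' /ₘ F ^ t) = c' := Polynomial.modByMonic_add_div c' (F ^ t)
  have hFsplit : ∀ i : Fin (n + 1), F ^ t = f i ^ t * ∏ j ∈ Finset.univ.erase i, f j ^ t := by
    intro i
    rw [hF, ← Finset.prod_pow]
    exact (Finset.mul_prod_erase Finset.univ (fun j => f j ^ t) (Finset.mem_univ i)).symm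
  have hkey : ∀ i : Fin (n + 1), Polynomial.C k ^ NN i * (rem - Polynomial.C k ^ M * g i)
      = f i ^ t * (ββ i - Polynomial.C k ^ NN i * (c' /ₘ F ^ t)
        * ∏ j ∈ Finset.univ.erase i, f j ^ t) := by
    intro i
    linear_combination hNN i + (Polynomial.C k) ^ (NN i) * hmodeq
      - ((Polynomial.C k) ^ (NN i) * (c' /ₘ F ^ t)) * hFsplit i
  -- the element a
  set D : RatFunc ℚ := (k : RatFunc ℚ) ^ (m + M) * toRF F ^ t with hD
  have hDne : D ≠ 0 :=
    mul_ne_zero (pow_ne_zero _ hkRF) (pow_ne_zero _ (toRF_ne_zero hFmonic.ne_zero))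
  set a : RatFunc ℚ := toRF rem * D⁻¹ with ha
  have hFtn : toRF F ^ t = ∏ j, toRF (f j) ^ t := by
    rw [hF, toRF_prod, Finset.prod_pow]
  refine ⟨a, ?_, ?_, ?_⟩
  · -- membership
    have hXmem : toRF (f 0) ∈ Subring.closure S := by
      have heq : (k : RatFunc ℚ) ^ (0 : ℤ)
          * ∏ j, toRF (f j) ^ ((Pi.single (0 : Fin (n + 1)) 1 : Fin (n + 1) → ℤ) j) = toRF (f 0) := by
        rw [zpow_zero, one_mul,
          Fintype.prod_eq_single (0 : Fin (n + 1))
            (fun j hj => by rw [Pi.single_eq_of_ne hj, zpow_zero]),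
          Pi.single_eq_same, zpow_one]
      exact heq ▸ Subring.subset_closure (by rw [hS]; exact ⟨(Pi.single (0 : Fin (n + 1)) (1 : ℤ), (0 : ℤ)), rfl⟩)
    have hpolymem : ∀ p : Polynomial ℤ, toRF p ∈ Subring.closure S := by
      intro p
      induction p using Polynomial.induction_on' with
      | add p q hp hq => rw [toRF_add]; exact Subring.add_mem _ hp hq
      | monomial nn aq =>
        rw [← Polynomial.C_mul_X_pow_eq_monomial, toRF_mul, toRF_pow]
        refine Subring.mul_mem _ ?_ (Subring.pow_mem _ (hf0 ▸ hXmem) nn)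
        have := intCast_mem (Subring.closure S) aq
        rwa [intCast_toRF] at this
    have hDinv : D⁻¹ ∈ Subring.closure S := by
      have heq : (k : RatFunc ℚ) ^ (-((m + M : ℕ) : ℤ)) * ∏ j, toRF (f j) ^ (-((t : ℕ) : ℤ))
          = D⁻¹ := by
        calc (k : RatFunc ℚ) ^ (-((m + M : ℕ) : ℤ)) * ∏ j, toRF (f j) ^ (-((t : ℕ) : ℤ))
            = ((k : RatFunc ℚ) ^ (m + M))⁻¹ * ∏ j, (toRF (f j) ^ t)⁻¹ := by
              rw [zpow_neg, zpow_natCast]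
              congr 1
              exact Finset.prod_congr rfl fun j _ => by rw [zpow_neg, zpow_natCast]
          _ = D⁻¹ := by rw [Finset.prod_inv_distrib, ← hFtn, hD, mul_inv]
      exact heq ▸ Subring.subset_closure
        (by rw [hS]; exact ⟨(fun _ => -((t : ℕ) : ℤ), -((m + M : ℕ) : ℤ)), rfl⟩)
    exact Subring.mul_mem _ (hpolymem rem) hDinv
  · -- valuations
    intro i
    have haai : aa i = toRF (Polynomial.C k ^ M * g i) * D⁻¹ := by
      rw [eq_mul_inv_iff_mul_eq₀ hDne, hD, toRF_mul, toRF_pow, ← intCast_toRF, pow_add]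
      linear_combination ((k : RatFunc ℚ) ^ M) * (hg i)
    have hsub : a - aa i = toRF (rem - Polynomial.C k ^ M * g i) * D⁻¹ := by
      rw [ha, haai, toRF_sub, sub_mul]
    choose cc hcc using fun j => V_fin (v i) (hvQ i) (hvmul i) (hfRF j)
    have hci : cc i = 1 := by
      have h := hvf i
      rw [hcc i] at h
      exact_mod_cast h
    have hcle : ∀ j ∈ Finset.univ.erase i, cc j ≤ 0 := by
      intro j hj
      have h := hvfj_le i j (Finset.ne_of_mem_erase hj).symm
      rw [hcc j] at h
      exact_mod_cast h
    have hVF : v i (toRF F) = ((∑ j, cc j : ℤ) : WithTop ℤ) := by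
      rw [hF, toRF_prod, V_prod (v i) (hvQ i) (hvmul i), WithTop.coe_sum]
      exact Finset.sum_congr rfl fun j _ => hcc j
    have hVD : v i D = ((t * ∑ j, cc j : ℤ) : WithTop ℤ) := by
      rw [hD, hvmul, hvkpow i (m + M), zero_add]
      exact V_pow (v i) (hvQ i) (hvmul i) hVF t
    have hVDinv : v i D⁻¹ = ((-(t * ∑ j, cc j) : ℤ) : WithTop ℤ) :=
      V_inv (v i) (hvQ i) (hvmul i) hDne hVD
    have hnum : ((t : ℤ) : WithTop ℤ) ≤ v i (toRF (rem - Polynomial.C k ^ M * g i)) := by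
      have h1 : v i (toRF (Polynomial.C k ^ NN i * (rem - Polynomial.C k ^ M * g i)))
          = v i (toRF (rem - Polynomial.C k ^ M * g i)) := by
        rw [toRF_mul, hvmul, ← hkpow, hvkpow i (NN i), zero_add]
      rw [← h1, hkey i, toRF_mul, toRF_pow, hvmul,
        V_pow (v i) (hvQ i) (hvmul i) (show v i (toRF (f i)) = ((1 : ℤ) : WithTop ℤ) by
          exact_mod_cast hvf i) t]
      calc ((t : ℤ) : WithTop ℤ) = ((t * 1 : ℤ) : WithTop ℤ) + 0 := by norm_num
        _ ≤ ((t * 1 : ℤ) : WithTop ℤ) + v i (toRF _) := add_le_add le_rfl (hpoly i _)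
    rw [hsub, hvmul, hVDinv]
    refine le_trans ?_ (add_le_add hnum le_rfl)
    rw [← WithTop.coe_add, show (0 : WithTop ℤ) = ((0 : ℤ) : WithTop ℤ) from rfl,
      WithTop.coe_le_coe]
    have hsum : ∑ j, cc j = cc i + ∑ j ∈ Finset.univ.erase i, cc j :=
      (Finset.add_sum_erase Finset.univ cc (Finset.mem_univ i)).symm
    have h1 : ∑ j ∈ Finset.univ.erase i, cc j ≤ 0 := Finset.sum_nonpos hcle
    have ht' : (0 : ℤ) ≤ (t : ℤ) := Int.natCast_nonneg t
    nlinarith [mul_nonneg ht' (neg_nonneg.mpr h1), hsum, hci]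
  · -- degree
    by_cases hrem0 : rem = 0
    · rw [ha, hrem0, toRF_zero, zero_mul, wdeg, if_pos rfl]
      exact WithTop.coe_lt_top 0
    · set DD : Polynomial ℤ := Polynomial.C k ^ (m + M) * F ^ t with hDD
      have hDtoRF : D = toRF DD := by
        rw [hDD, toRF_mul, toRF_pow, toRF_pow, ← intCast_toRF, hD]
      have hmapinj : Function.Injective ⇑(Int.castRingHom ℚ) := Int.cast_injective
      have hmapne : rem.map (Int.castRingHom ℚ) ≠ 0 := by
        rw [Ne, Polynomial.map_eq_zero_iff hmapinj]
        exact hrem0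
      have hDDne : DD ≠ 0 := mul_ne_zero (pow_ne_zero _ hCk) (pow_ne_zero _ hFmonic.ne_zero)
      have hmapDne : DD.map (Int.castRingHom ℚ) ≠ 0 := by
        rw [Ne, Polynomial.map_eq_zero_iff hmapinj]
        exact hDDne
      have ha2 : a = algebraMap (Polynomial ℚ) (RatFunc ℚ) (rem.map (Int.castRingHom ℚ))
          / algebraMap (Polynomial ℚ) (RatFunc ℚ) (DD.map (Int.castRingHom ℚ)) := by
        rw [ha, hDtoRF, div_eq_mul_inv]
        rfl
      rw [ha2, wdeg_div _ _ hmapne hmapDne,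
        natDegree_map_eq_of_injective hmapinj, natDegree_map_eq_of_injective hmapinj]
      have hdr : rem.natDegree < DD.natDegree := by
        have h2 : rem.degree < (F ^ t).degree := Polynomial.degree_modByMonic_lt c' hFtMonic
        rw [Polynomial.degree_eq_natDegree hFtMonic.ne_zero] at h2
        have h1 : rem.natDegree < (F ^ t).natDegree :=
          (Polynomial.natDegree_lt_iff_degree_lt hrem0).mpr h2
        rw [hDD, ← Polynomial.C_pow, Polynomial.natDegree_C_mul (pow_ne_zero _ hkz)]
        exact h1
      rw [show (0 : WithTop ℤ) = ((0 : ℤ) : WithTop ℤ) from rfl, WithTop.coe_lt_coe]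
      omega
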